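/- For every ε ∈ (0,1), the ε-mixing time of the graph-enabled discretized MCMC satisfies t_{mix,d}(ε) ≤ ⌈ ( max_{i ∈ {1,…,B}} L(i) / ( ρ B^{−1} Σ_{i=1}^B L(i) ) ) · log(1/ε) ⌉. -/

import Mathlib

open Finset

/-- mixing time bound for the graph-enabled discretized MCMC:
`t_mix(ε) ≤ ⌈ (max L / (ρ B⁻¹ Σ L)) log(1/ε) ⌉`. -/
theorem stmt_9
    (B : ℕ) (hB : 1 ≤ B)
    (E : Fin B → Fin B → Prop) [DecidableRel E]
    (hEsymm : ∀ i j, E i j → E j i) (hEirr : ∀ i, ¬ E i i)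
    (D : Fin B → ℕ)
    (hD : ∀ i, D i = (Finset.univ.filter (fun j => E i j)).card)
    (hD1 : ∀ i, 1 ≤ D i)
    (ρ : ℝ) (hρ0 : 0 < ρ) (hρ1 : ρ < 1)
    (q : Fin B → Fin B → ℝ)
    (hq : ∀ i j, q i j = ρ / B + (1 - ρ) * (if E i j then (1 : ℝ) else 0) / (D i))
    (L : Fin B → ℝ) (hL : ∀ i, 0 < L i)
    (P : Fin B → Fin B → ℝ)
    (hPoff : ∀ i j, i ≠ j → P i j = q i j * min (q j i * L j / (q i j * L i)) 1)
    (hPdiag : ∀ i, P i i = 1 - ∑ j ∈ Finset.univ.erase i, P i j)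
    (πd : Fin B → ℝ) (hπd : ∀ j, πd j = L j / ∑ ℓ, L ℓ)
    -- `νt t` is the distribution of the chain at time `t`, started from the uniform distribution
    (νt : ℕ → Fin B → ℝ)
    (hν0 : ∀ i, νt 0 i = 1 / B)
    (hνrec : ∀ t j, νt (t + 1) j = ∑ i, νt t i * P i j)
    -- total variation distance to stationarity at time `t`
    (TV : ℕ → ℝ)
    (hTV : ∀ t, TV t = ⨆ A : Finset (Fin B), |∑ j ∈ A, νt t j - ∑ j ∈ A, πd j|)
    (ε : ℝ) (hε0 : 0 < ε) (hε1 : ε < 1)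
    -- the ε-mixing time
    (tmix : ℕ) (htmix : tmix = sInf {t : ℕ | TV t ≤ ε}) :
    tmix ≤ ⌈(Finset.univ.sup' ⟨⟨0, hB⟩, Finset.mem_univ _⟩ L /
      (ρ * (B : ℝ)⁻¹ * ∑ i, L i)) * Real.log ε⁻¹⌉₊ := by
  have hB0 : (0:ℝ) < B := by exact_mod_cast Nat.lt_of_lt_of_le Nat.zero_lt_one hB
  set i0 : Fin B := ⟨0, hB⟩ with hi0
  set M : ℝ := Finset.univ.sup' ⟨⟨0, hB⟩, Finset.mem_univ _⟩ L with hMdef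
  have hM : ∀ i, L i ≤ M := fun i => Finset.le_sup' L (mem_univ i)
  have hMpos : 0 < M := lt_of_lt_of_le (hL i0) (hM i0)
  set S : ℝ := ∑ ℓ, L ℓ with hSdef
  have hSpos : 0 < S := Finset.sum_pos (fun i _ => hL i) ⟨i0, mem_univ _⟩
  set δ : ℝ := ρ * (B:ℝ)⁻¹ * S / M with hδdef
  have hδpos : 0 < δ := by positivity
  have hSle : S ≤ B * M := by
    calc S ≤ Finset.univ.card • M := Finset.sum_le_card_nsmul _ _ _ (fun i _ => hM i)
    _ = B * M := by simp [mul_comm]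
  have hδlt : δ < 1 := by
    have : δ ≤ ρ := by
      rw [hδdef, div_le_iff₀ hMpos]
      calc ρ * (B:ℝ)⁻¹ * S ≤ ρ * (B:ℝ)⁻¹ * (B * M) := by
            apply mul_le_mul_of_nonneg_left hSle (by positivity)
      _ = ρ * M := by field_simp
    linarith
  -- basic positivity of q
  have hite : ∀ i j, (0:ℝ) ≤ (if E i j then (1:ℝ) else 0) := by
    intro i j; split <;> norm_num
  have hDpos : ∀ i, (0:ℝ) < D i := by
    intro i; exact_mod_cast hD1 i
  have hqlb : ∀ i j, ρ / B ≤ q i j := by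
    intro i j; rw [hq]
    have h2 : 0 ≤ ((1-ρ) * if E i j then (1:ℝ) else 0) / (D i) :=
      div_nonneg (mul_nonneg (by linarith) (hite i j)) (le_of_lt (hDpos i))
    linarith
  have hqpos : ∀ i j, 0 < q i j := fun i j => lt_of_lt_of_le (by positivity) (hqlb i j)
  have hqsum : ∀ i, ∑ j, q i j = 1 := by
    intro i
    have hDi := hDpos i
    simp only [hq]
    rw [Finset.sum_add_distrib, Finset.sum_const, card_univ, Fintype.card_fin]
    have h2 : ∑ j, (1-ρ) * (if E i j then (1:ℝ) else 0) / (D i) = (1-ρ) := by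
      rw [← Finset.sum_div, ← Finset.mul_sum, Finset.sum_boole]
      have : ((Finset.univ.filter (fun j => E i j)).card : ℝ) = (D i : ℝ) := by
        rw [hD i]
      rw [this]
      field_simp
    rw [h2]
    have hB0' : (B:ℝ) ≠ 0 := ne_of_gt hB0
    rw [nsmul_eq_mul, mul_div_cancel₀ ρ hB0']; ring
  have hqdiag : ∀ i, q i i = ρ / B := by
    intro i; rw [hq]; simp [hEirr i]
  -- off-diagonal formula
  have hPoff' : ∀ i j, i ≠ j → P i j = min (q j i * L j) (q i j * L i) / L i := by
    intro i j hij
    have hqL : 0 < q i j * L i := mul_pos (hqpos i j) (hL i)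
    rw [hPoff i j hij, eq_div_iff (ne_of_gt (hL i))]
    have h1 : q i j * (min (q j i * L j / (q i j * L i)) 1) * L i
        = (q i j * L i) * (min (q j i * L j / (q i j * L i)) 1) := by ring
    rw [h1, mul_min_of_nonneg _ _ hqL.le, mul_div_cancel₀ _ (ne_of_gt hqL), mul_one]
  have hPle : ∀ i j, i ≠ j → P i j ≤ q i j := by
    intro i j hij
    rw [hPoff i j hij]
    exact mul_le_of_le_one_right (le_of_lt (hqpos i j)) (min_le_right _ _)
  -- diagonal lower bound
  have hPdiaglb : ∀ i, ρ / B ≤ P i i := by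
    intro i
    rw [hPdiag i]
    have h1 : ∑ j ∈ Finset.univ.erase i, P i j ≤ ∑ j ∈ Finset.univ.erase i, q i j := by
      apply Finset.sum_le_sum
      intro j hj
      exact hPle i j (Ne.symm (Finset.ne_of_mem_erase hj))
    have h2 : ∑ j ∈ Finset.univ.erase i, q i j = 1 - ρ / B := by
      have := Finset.sum_erase_add Finset.univ (q i) (mem_univ i)
      rw [hqsum i] at this
      rw [← hqdiag i]; linarith
    linarith
  have hπpos : ∀ j, 0 < πd j := by
    intro j; rw [hπd]; exact div_pos (hL j) hSpos
  have hπsum : ∑ j, πd j = 1 := by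
    simp only [hπd]
    rw [← Finset.sum_div]
    exact div_self (ne_of_gt hSpos)
  -- Doeblin minorization
  have hδπ : ∀ j, δ * πd j = ρ / B * (L j / M) := by
    intro j
    rw [hπd, hδdef]
    field_simp
  have hPlow : ∀ i j, δ * πd j ≤ P i j := by
    intro i j
    rw [hδπ]
    by_cases hij : i = j
    · subst hij
      calc ρ / B * (L i / M) ≤ ρ / B * 1 := by
            apply mul_le_mul_of_nonneg_left _ (by positivity)
            rw [div_le_one hMpos]; exact hM i
        _ = ρ / B := mul_one _
        _ ≤ P i i := hPdiaglb i
    · rw [hPoff' i j hij, le_div_iff₀ (hL i)]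
      have hmin : ρ / B * min (L j) (L i) ≤ min (q j i * L j) (q i j * L i) := by
        apply le_min
        · calc ρ / B * min (L j) (L i) ≤ ρ / B * L j := by
                apply mul_le_mul_of_nonneg_left (min_le_left _ _) (by positivity)
            _ ≤ q j i * L j := mul_le_mul_of_nonneg_right (hqlb j i) (le_of_lt (hL j))
        · calc ρ / B * min (L j) (L i) ≤ ρ / B * L i := by
                apply mul_le_mul_of_nonneg_left (min_le_right _ _) (by positivity)
            _ ≤ q i j * L i := mul_le_mul_of_nonneg_right (hqlb i j) (le_of_lt (hL i))
      have hmin2 : L j * L i / M ≤ min (L j) (L i) := by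
        rcases le_total (L j) (L i) with h | h
        · rw [min_eq_left h, div_le_iff₀ hMpos]
          nlinarith [hM i, hL j]
        · rw [min_eq_right h, div_le_iff₀ hMpos]
          nlinarith [hM j, hL i]
      calc ρ / B * (L j / M) * L i = ρ / B * (L j * L i / M) := by ring
        _ ≤ ρ / B * min (L j) (L i) := by
            apply mul_le_mul_of_nonneg_left hmin2 (by positivity)
        _ ≤ min (q j i * L j) (q i j * L i) := hmin
  have hPnn : ∀ i j, 0 ≤ P i j := by
    intro i j
    exact le_trans (le_of_lt (mul_pos hδpos (hπpos j))) (hPlow i j)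
  have hProw : ∀ i, ∑ j, P i j = 1 := by
    intro i
    have := Finset.sum_erase_add Finset.univ (P i) (mem_univ i)
    rw [hPdiag i] at this
    linarith [this]
  -- detailed balance and stationarity
  have hdb : ∀ i j, L i * P i j = L j * P j i := by
    intro i j
    by_cases hij : i = j
    · subst hij; ring
    · rw [hPoff' i j hij, hPoff' j i (Ne.symm hij)]
      rw [mul_div_assoc', mul_div_assoc']
      rw [mul_comm (L i), mul_comm (L j)]
      rw [mul_div_assoc, mul_div_assoc]
      rw [div_self (ne_of_gt (hL i)), div_self (ne_of_gt (hL j))]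
      rw [mul_one, mul_one, min_comm]
  have hstat : ∀ j, ∑ i, πd i * P i j = πd j := by
    intro j
    have : ∀ i, πd i * P i j = (L j * P j i) / S := by
      intro i
      rw [hπd, div_mul_eq_mul_div, hdb i j]
    simp only [this]
    rw [← Finset.sum_div, ← Finset.mul_sum, hProw j, mul_one, hπd]
  -- properties of νt
  have hνsum : ∀ t, ∑ i, νt t i = 1 := by
    intro t
    induction t with
    | zero =>
      simp only [hν0]
      rw [Finset.sum_const, card_univ, Fintype.card_fin]
      rw [nsmul_eq_mul, mul_one_div_cancel hB0.ne']
    | succ t ih =>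
      simp only [hνrec]
      rw [Finset.sum_comm]
      simp only [← Finset.mul_sum]
      simp only [hProw, mul_one]
      exact ih
  have hνnn : ∀ t i, 0 ≤ νt t i := by
    intro t
    induction t with
    | zero => intro i; rw [hν0]; positivity
    | succ t ih =>
      intro j
      rw [hνrec]
      exact Finset.sum_nonneg (fun i _ => mul_nonneg (ih i) (hPnn i j))
  have hbdd : ∀ t, BddAbove (Set.range fun A : Finset (Fin B) =>
      |∑ j ∈ A, νt t j - ∑ j ∈ A, πd j|) := by
    intro t
    exact Set.Finite.bddAbove (Set.finite_range _)
  have hTVle : ∀ t (A : Finset (Fin B)), |∑ j ∈ A, νt t j - ∑ j ∈ A, πd j| ≤ TV t := by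
    intro t A
    rw [hTV]
    exact le_ciSup (hbdd t) A
  -- contraction
  have hcon : ∀ t, TV (t + 1) ≤ (1 - δ) * TV t := by
    intro t
    rw [hTV (t+1)]
    apply ciSup_le
    intro A
    set c : Fin B → ℝ := fun i => νt t i - πd i with hc
    have hc0 : ∑ i, c i = 0 := by
      simp only [hc]
      rw [Finset.sum_sub_distrib, hνsum t, hπsum, sub_self]
    set g : Fin B → ℝ := fun i => ∑ j ∈ A, (P i j - δ * πd j) with hg
    have hgnn : ∀ i, 0 ≤ g i := by
      intro i
      exact Finset.sum_nonneg (fun j _ => sub_nonneg.mpr (hPlow i j))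
    have hgle : ∀ i, g i ≤ 1 - δ := by
      intro i
      calc g i ≤ ∑ j, (P i j - δ * πd j) := by
            apply Finset.sum_le_sum_of_subset_of_nonneg (Finset.subset_univ A)
            intro j _ _
            exact sub_nonneg.mpr (hPlow i j)
        _ = 1 - δ := by
            rw [Finset.sum_sub_distrib, hProw i, ← Finset.mul_sum, hπsum, mul_one]
    have hkey : ∑ j ∈ A, νt (t+1) j - ∑ j ∈ A, πd j = ∑ i, c i * g i := by
      have step1 : ∑ j ∈ A, νt (t+1) j - ∑ j ∈ A, πd j
          = ∑ i, c i * ∑ j ∈ A, P i j := by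
        rw [← Finset.sum_sub_distrib]
        have : ∀ j ∈ A, νt (t+1) j - πd j = ∑ i, c i * P i j := by
          intro j _
          rw [hνrec t j, ← hstat j, ← Finset.sum_sub_distrib]
          apply Finset.sum_congr rfl
          intro i _
          have hci : c i = νt t i - πd i := rfl
          rw [hci]; ring
        rw [Finset.sum_congr rfl this, Finset.sum_comm]
        exact Finset.sum_congr rfl (fun i _ => (Finset.mul_sum _ _ _).symm)
      have hgsplit : ∀ i, c i * g i = c i * (∑ j ∈ A, P i j) - (δ * ∑ j ∈ A, πd j) * c i := by
        intro i
        have hgi : g i = ∑ j ∈ A, P i j - δ * ∑ j ∈ A, πd j := by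
          simp only [hg]
          rw [Finset.sum_sub_distrib, ← Finset.mul_sum]
        rw [hgi]; ring
      have step2 : ∑ i, c i * g i = ∑ i, c i * (∑ j ∈ A, P i j)
          - (δ * ∑ j ∈ A, πd j) * ∑ i, c i := by
        rw [Finset.mul_sum, ← Finset.sum_sub_distrib]
        exact Finset.sum_congr rfl (fun i _ => hgsplit i)
      rw [step1, step2, hc0, mul_zero, sub_zero]
    have h1δ : 0 ≤ 1 - δ := le_of_lt (sub_pos.mpr hδlt)
    rw [hkey]
    rw [abs_le]
    constructor
    · -- lower bound
      set Am := Finset.univ.filter (fun i => ¬ (0 ≤ c i)) with hAm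
      have hsplit := Finset.sum_filter_add_sum_filter_not Finset.univ (fun i => 0 ≤ c i)
        (fun i => c i * g i)
      have h2 : ∑ i ∈ Am, c i * g i ≤ ∑ i, c i * g i := by
        rw [← hsplit]
        have : 0 ≤ ∑ i ∈ Finset.univ.filter (fun i => 0 ≤ c i), c i * g i :=
          Finset.sum_nonneg (fun i hi => mul_nonneg (Finset.mem_filter.mp hi).2 (hgnn i))
        linarith
      have h3 : (1 - δ) * ∑ i ∈ Am, c i ≤ ∑ i ∈ Am, c i * g i := by
        rw [Finset.mul_sum]
        apply Finset.sum_le_sum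
        intro i hi
        have hci : c i ≤ 0 := le_of_lt (not_le.mp (Finset.mem_filter.mp hi).2)
        calc (1 - δ) * c i = c i * (1 - δ) := by ring
          _ ≤ c i * g i := mul_le_mul_of_nonpos_left (hgle i) hci
      have h4 : -(TV t) ≤ ∑ i ∈ Am, c i := by
        have : ∑ i ∈ Am, c i = ∑ j ∈ Am, νt t j - ∑ j ∈ Am, πd j := by
          rw [← Finset.sum_sub_distrib]
        rw [this]
        have hab := hTVle t Am
        have hna := neg_abs_le (∑ j ∈ Am, νt t j - ∑ j ∈ Am, πd j)
        linarith
      calc -((1 - δ) * TV t) = (1 - δ) * (-(TV t)) := by ring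
        _ ≤ (1 - δ) * ∑ i ∈ Am, c i := mul_le_mul_of_nonneg_left h4 h1δ
        _ ≤ ∑ i ∈ Am, c i * g i := h3
        _ ≤ ∑ i, c i * g i := h2
    · -- upper bound
      set Ap := Finset.univ.filter (fun i => 0 ≤ c i) with hAp
      have hsplit := Finset.sum_filter_add_sum_filter_not Finset.univ (fun i => 0 ≤ c i)
        (fun i => c i * g i)
      have h2 : ∑ i, c i * g i ≤ ∑ i ∈ Ap, c i * g i := by
        rw [← hsplit]
        have : ∑ i ∈ Finset.univ.filter (fun i => ¬ (0 ≤ c i)), c i * g i ≤ 0 :=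
          Finset.sum_nonpos (fun i hi =>
            mul_nonpos_of_nonpos_of_nonneg
              (le_of_lt (not_le.mp (Finset.mem_filter.mp hi).2)) (hgnn i))
        linarith
      have h3 : ∑ i ∈ Ap, c i * g i ≤ (1 - δ) * ∑ i ∈ Ap, c i := by
        rw [Finset.mul_sum]
        apply Finset.sum_le_sum
        intro i hi
        have hci : 0 ≤ c i := (Finset.mem_filter.mp hi).2
        calc c i * g i ≤ c i * (1 - δ) := mul_le_mul_of_nonneg_left (hgle i) hci
          _ = (1 - δ) * c i := by ring
      have h4 : ∑ i ∈ Ap, c i ≤ TV t := by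
        have heq : ∑ i ∈ Ap, c i = ∑ j ∈ Ap, νt t j - ∑ j ∈ Ap, πd j := by
          rw [← Finset.sum_sub_distrib]
        rw [heq]
        exact le_trans (le_abs_self _) (hTVle t Ap)
      calc ∑ i, c i * g i ≤ ∑ i ∈ Ap, c i * g i := h2
        _ ≤ (1 - δ) * ∑ i ∈ Ap, c i := h3
        _ ≤ (1 - δ) * TV t := mul_le_mul_of_nonneg_left h4 h1δ
  -- TV 0 ≤ 1
  have hTV0 : TV 0 ≤ 1 := by
    rw [hTV 0]
    apply ciSup_le
    intro A
    have h1 : 0 ≤ ∑ j ∈ A, νt 0 j := Finset.sum_nonneg (fun j _ => hνnn 0 j)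
    have h2 : ∑ j ∈ A, νt 0 j ≤ 1 := by
      rw [← hνsum 0]
      exact Finset.sum_le_sum_of_subset_of_nonneg (Finset.subset_univ A)
        (fun j _ _ => hνnn 0 j)
    have h3 : 0 ≤ ∑ j ∈ A, πd j := Finset.sum_nonneg (fun j _ => le_of_lt (hπpos j))
    have h4 : ∑ j ∈ A, πd j ≤ 1 := by
      rw [← hπsum]
      exact Finset.sum_le_sum_of_subset_of_nonneg (Finset.subset_univ A)
        (fun j _ _ => le_of_lt (hπpos j))
    rw [abs_le]
    constructor <;> linarith
  have h1δ : 0 ≤ 1 - δ := le_of_lt (sub_pos.mpr hδlt)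
  have hTVt : ∀ t, TV t ≤ (1 - δ)^t := by
    intro t
    induction t with
    | zero => simpa using hTV0
    | succ t ih =>
      calc TV (t+1) ≤ (1 - δ) * TV t := hcon t
        _ ≤ (1 - δ) * (1 - δ)^t := mul_le_mul_of_nonneg_left ih h1δ
        _ = (1 - δ)^(t+1) := by ring
  -- conclusion
  set T := ⌈(M / (ρ * (B:ℝ)⁻¹ * S)) * Real.log ε⁻¹⌉₊ with hT
  have hTmem : TV T ≤ ε := by
    have hceil : (M / (ρ * (B:ℝ)⁻¹ * S)) * Real.log ε⁻¹ ≤ (T:ℝ) := Nat.le_ceil _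
    have hδT : Real.log ε⁻¹ ≤ δ * T := by
      have h5 : δ * ((M / (ρ * (B:ℝ)⁻¹ * S)) * Real.log ε⁻¹) = Real.log ε⁻¹ := by
        rw [hδdef]
        field_simp
      calc Real.log ε⁻¹ = δ * ((M / (ρ * (B:ℝ)⁻¹ * S)) * Real.log ε⁻¹) := h5.symm
        _ ≤ δ * T := mul_le_mul_of_nonneg_left hceil (le_of_lt hδpos)
    calc TV T ≤ (1 - δ)^T := hTVt T
      _ ≤ (Real.exp (-δ))^T := by
          apply pow_le_pow_left₀ h1δ
          linarith [Real.add_one_le_exp (-δ)]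
      _ = Real.exp (-δ * T) := by
          rw [← Real.exp_nat_mul]; ring_nf
      _ ≤ Real.exp (Real.log ε) := by
          apply Real.exp_le_exp.mpr
          rw [Real.log_inv] at hδT
          linarith
      _ = ε := Real.exp_log hε0
  rw [htmix]
  exact Nat.sInf_le hTmem
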